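/- Let H be a complex Hilbert space, φ : H →L[ℂ] H a finite potent continuous linear operator with index at most 1 (IsCompl (LinearMap.range φ) (LinearMap.ker φ)), and X : H →L[ℂ] H a core inverse of φ. Then X = φ† (the Hilbert adjoint of φ) if and only if φ ∘ φ† ∘ φ = φ and φ is EP, i.e. LinearMap.range φ† = LinearMap.range φ. -/

import Mathlib

theorem core_stmt15 {H : Type*} [NormedAddCommGroup H] [InnerProductSpace ℂ H]
    [CompleteSpace H] (φ X : H →L[ℂ] H)
    (hfp : ∃ n : ℕ, FiniteDimensional ℂ (LinearMap.range ((φ ^ n : H →L[ℂ] H) : H →ₗ[ℂ] H)))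
    (hidx : IsCompl (LinearMap.range (φ : H →ₗ[ℂ] H)) (LinearMap.ker (φ : H →ₗ[ℂ] H)))
    (hX1 : ∀ v : H, v - φ (X v) ∈ (LinearMap.range (φ : H →ₗ[ℂ] H))ᗮ)
    (hX2 : LinearMap.range (X : H →ₗ[ℂ] H) ≤ LinearMap.range (φ : H →ₗ[ℂ] H)) :
    X = ContinuousLinearMap.adjoint φ ↔
      (φ ∘L ContinuousLinearMap.adjoint φ ∘L φ = φ ∧
        LinearMap.range (ContinuousLinearMap.adjoint φ : H →ₗ[ℂ] H) = LinearMap.range (φ : H →ₗ[ℂ] H)) := by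
  set ψ := ContinuousLinearMap.adjoint φ with hψ
  -- disjointness of range φ and its orthogonal
  have hdisj : ∀ w : H, w ∈ LinearMap.range (φ : H →ₗ[ℂ] H) → w ∈ (LinearMap.range (φ : H →ₗ[ℂ] H))ᗮ → w = 0 := by
    intro w h1 h2
    exact Submodule.disjoint_def.mp (Submodule.orthogonal_disjoint _) w h1 h2
  have hrk : ∀ w : H, w ∈ LinearMap.range (φ : H →ₗ[ℂ] H) → w ∈ LinearMap.ker (φ : H →ₗ[ℂ] H) → w = 0 := by
    intro w h1 h2
    exact Submodule.disjoint_def.mp hidx.disjoint w h1 h2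
  constructor
  · rintro rfl
    -- X = ψ. First: φ ∘ ψ ∘ φ = φ
    have key : ∀ u : H, φ (ψ (φ u)) = φ u := by
      intro u
      have h1 : φ u - φ (ψ (φ u)) ∈ (LinearMap.range (φ : H →ₗ[ℂ] H))ᗮ := hX1 (φ u)
      have h2 : φ u - φ (ψ (φ u)) ∈ LinearMap.range (φ : H →ₗ[ℂ] H) :=
        sub_mem ⟨u, rfl⟩ ⟨ψ (φ u), rfl⟩
      have := hdisj _ h2 h1
      have := sub_eq_zero.mp this
      exact this.symm
    refine ⟨by ext u; exact key u, ?_⟩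
    -- range ψ = range φ
    -- finite dimensionality of range φ
    obtain ⟨n, hn⟩ := hfp
    have hC : ∀ x ∈ LinearMap.range (φ : H →ₗ[ℂ] H), ∃ y ∈ LinearMap.range (φ : H →ₗ[ℂ] H), φ y = x := by
      rintro _ ⟨u, rfl⟩
      obtain ⟨r, k, hr, hk, rfl⟩ :=
        Submodule.codisjoint_iff_exists_add_eq.mp hidx.codisjoint u
      refine ⟨r, hr, ?_⟩
      have hk0 : φ k = 0 := hk
      simp [map_add, hk0]
    have hD : ∀ m : ℕ, LinearMap.range (φ : H →ₗ[ℂ] H) ≤ LinearMap.range ((φ ^ m : H →L[ℂ] H) : H →ₗ[ℂ] H) := by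
      intro m
      induction m with
      | zero => intro x _; exact ⟨x, by simp⟩
      | succ m ih =>
        intro x hx
        obtain ⟨y, hy, rfl⟩ := hC x hx
        obtain ⟨u, hu⟩ := ih hy
        exact ⟨u, by rw [ContinuousLinearMap.coe_coe] at hu; rw [ContinuousLinearMap.coe_coe, pow_succ', ContinuousLinearMap.mul_apply, hu]⟩
    have hfd : FiniteDimensional ℂ (LinearMap.range (φ : H →ₗ[ℂ] H)) :=
      Submodule.finiteDimensional_of_le (hD n)
    -- ψ maps range φ into range φ, injectively
    have hmem : ∀ x ∈ LinearMap.range (φ : H →ₗ[ℂ] H), ψ x ∈ LinearMap.range (φ : H →ₗ[ℂ] H) := by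
      intro x _
      exact hX2 ⟨x, rfl⟩
    set g : LinearMap.range (φ : H →ₗ[ℂ] H) →ₗ[ℂ] LinearMap.range (φ : H →ₗ[ℂ] H) :=
      LinearMap.restrict (ψ.toLinearMap) hmem with hg
    have hginj : Function.Injective g := by
      rintro ⟨x, hx⟩ ⟨y, hy⟩ hxy
      have hψeq : ψ x = ψ y := congrArg Subtype.val hxy
      have hz : ψ (x - y) = 0 := by rw [map_sub, hψeq, sub_self]
      have hxyr : x - y ∈ LinearMap.range (φ : H →ₗ[ℂ] H) := sub_mem hx hy
      obtain ⟨u, hu⟩ := hxyr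
      have : (inner ℂ (x - y) (x - y) : ℂ) = 0 := by
        calc (inner ℂ (x - y) (x - y) : ℂ) = inner ℂ (x - y) (φ u) := by rw [← ContinuousLinearMap.coe_coe, hu]
        _ = inner ℂ (ψ (x - y)) u := (ContinuousLinearMap.adjoint_inner_left φ u (x - y)).symm
        _ = 0 := by rw [hz, inner_zero_left]
      have : x - y = 0 := inner_self_eq_zero.mp this
      exact Subtype.ext (sub_eq_zero.mp this)
    have hgsurj : Function.Surjective g := by
      rwa [← LinearMap.injective_iff_surjective]
    apply le_antisymm hX2
    rintro _ ⟨u, rfl⟩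
    obtain ⟨⟨x, hx⟩, hgx⟩ := hgsurj ⟨φ u, ⟨u, rfl⟩⟩
    have : ψ x = φ u := congrArg Subtype.val hgx
    exact ⟨x, this⟩
  · rintro ⟨h1, h2⟩
    -- backward: X = ψ
    have h1' : ∀ v, φ (ψ (φ v)) = φ v := fun v => congrFun (congrArg DFunLike.coe h1) v
    -- ψ φ ψ = ψ : take adjoints of h1
    have h1adj : ∀ v, ψ (φ (ψ v)) = ψ v := by
      have := congrArg ContinuousLinearMap.adjoint h1
      rw [ContinuousLinearMap.adjoint_comp, ContinuousLinearMap.adjoint_comp,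
        ContinuousLinearMap.adjoint_adjoint] at this
      intro v
      exact congrFun (congrArg DFunLike.coe this) v
    -- v - φ (ψ v) ∈ (range φ)ᗮ
    have hψorth : ∀ v : H, v - φ (ψ v) ∈ (LinearMap.range (φ : H →ₗ[ℂ] H))ᗮ := by
      intro v
      rw [Submodule.mem_orthogonal]
      rintro _ ⟨u, rfl⟩
      have : (inner ℂ (φ u) (φ (ψ v)) : ℂ) = inner ℂ (φ u) v := by
        calc (inner ℂ (φ u) (φ (ψ v)) : ℂ) = inner ℂ (ψ (φ u)) (ψ v) :=
              (ContinuousLinearMap.adjoint_inner_left φ (ψ v) (φ u)).symm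
        _ = inner ℂ (φ (ψ (φ u))) v := ContinuousLinearMap.adjoint_inner_right φ (ψ (φ u)) v
        _ = inner ℂ (φ u) v := by rw [h1' u]
      rw [inner_sub_right, ContinuousLinearMap.coe_coe, this, sub_self]
    ext v
    have hd1 : X v - ψ v ∈ LinearMap.range (φ : H →ₗ[ℂ] H) := by
      refine sub_mem (hX2 ⟨v, rfl⟩) ?_
      rw [← h2]
      exact ⟨v, rfl⟩
    have hφd : φ (X v - ψ v) ∈ (LinearMap.range (φ : H →ₗ[ℂ] H))ᗮ := by
      have : φ (X v - ψ v) = (v - φ (ψ v)) - (v - φ (X v)) := by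
        rw [map_sub]; abel
      rw [this]
      exact sub_mem (hψorth v) (hX1 v)
    have hφd0 : φ (X v - ψ v) = 0 := hdisj _ ⟨X v - ψ v, rfl⟩ hφd
    have := hrk _ hd1 hφd0
    exact sub_eq_zero.mp this
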